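/- Let Â, B̂ be in SL(2,ℂ) and set A = Φ*(Â), B = Φ*(B̂) and C = (BA)⁻¹ in SL(3,ℂ). Then σ₊(A,B,C) = tr(A) + tr(B) + tr(C) + 1 − 2·tr(Â)·tr(B̂)·tr(ÂB̂). -/
import Mathlib


open Matrix

/-- The irreducible representation of `SL(2,ℂ)` on `ℂ³` at the level of matrices. -/
noncomputable def PhiStar (M : Matrix (Fin 2) (Fin 2) ℂ) : Matrix (Fin 3) (Fin 3) ℂ :=
  !![(M 0 0) ^ 2, -(Real.sqrt 2 : ℂ) * M 0 0 * M 0 1, -(M 0 1) ^ 2;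
     -(Real.sqrt 2 : ℂ) * M 0 0 * M 1 0, M 0 0 * M 1 1 + M 0 1 * M 1 0,
       (Real.sqrt 2 : ℂ) * M 0 1 * M 1 1;
     -(M 1 0) ^ 2, (Real.sqrt 2 : ℂ) * M 1 0 * M 1 1, (M 1 1) ^ 2]

lemma PhiStar_right_inv (M : Matrix (Fin 2) (Fin 2) ℂ)
    (hM : M 0 0 * M 1 1 - M 0 1 * M 1 0 = 1) :
    (PhiStar M)⁻¹ = PhiStar !![M 1 1, -(M 0 1); -(M 1 0), M 0 0] := by
  have hs : ((Real.sqrt 2 : ℝ) : ℂ) ^ 2 = 2 := by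
    norm_cast
    rw [Real.sq_sqrt] <;> norm_num
  apply inv_eq_right_inv
  set a := M 0 0; set b := M 0 1; set c := M 1 0; set d := M 1 1
  ext i j
  fin_cases i <;> fin_cases j <;>
    simp [PhiStar, Matrix.mul_apply, Fin.sum_univ_three, Matrix.one_apply]
  · linear_combination (1 - b*c + a*d) * hM + (-(a*b*c*d)) * hs
  · linear_combination 0 * hM
  · linear_combination (a^2*b^2) * hs
  · linear_combination 0 * hM
  · linear_combination (1 - b*c + a*d) * hM + (-2*a*b*c*d) * hs
  · linear_combination 0 * hM
  · linear_combination (c^2*d^2) * hs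
  · linear_combination 0 * hM
  · linear_combination (1 - b*c + a*d) * hM + (-(a*b*c*d)) * hs

theorem shape_invariant_of_irreducible_image
    (Ah Bh : Matrix (Fin 2) (Fin 2) ℂ) (hA : Ah.det = 1) (hB : Bh.det = 1) :
    (let A := PhiStar Ah; let B := PhiStar Bh; let C := (B * A)⁻¹;
     (A⁻¹ * B).trace - (A⁻¹).trace * B.trace
       = A.trace + B.trace + C.trace + 1
         - 2 * Ah.trace * Bh.trace * (Ah * Bh).trace) := by
  have hs : ((Real.sqrt 2 : ℝ) : ℂ) ^ 2 = 2 := by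
    norm_cast
    rw [Real.sq_sqrt] <;> norm_num
  rw [Matrix.det_fin_two] at hA hB
  have hAinv := PhiStar_right_inv Ah hA
  have hBinv := PhiStar_right_inv Bh hB
  simp only [Matrix.mul_inv_rev, hAinv, hBinv]
  set a := Ah 0 0; set b := Ah 0 1; set c := Ah 1 0; set d := Ah 1 1
  set e := Bh 0 0; set f := Bh 0 1; set g := Bh 1 0; set h := Bh 1 1
  simp [PhiStar, Matrix.trace_fin_three, Matrix.trace_fin_two, Matrix.mul_apply,
    Fin.sum_univ_three, Fin.sum_univ_two]
  linear_combination (-1 + h^2 - f*g + 3*e*h + e^2) * hA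
    + (2 + d^2 + 2*b*c + a^2) * hB
    + (-(c*d*f*h + c*d*e*f + b*d*g*h + b*d*e*g + a*c*f*h + a*c*e*f + a*b*g*h + a*b*e*g)) * hs
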